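/- Every nonempty C∞-word w has exactly two primitives if w begins and ends with 1, exactly eight primitives if w begins and ends with 2, and exactly four primitives otherwise. -/

import Mathlib

namespace CInfWords

open scoped Classical

/-- Run-length encoding Δ of a word. -/
def rle : List ℕ → List ℕ
  | [] => []
  | [_] => [1]
  | a :: b :: l =>
    if a = b then
      match rle (b :: l) with
      | [] => [1]
      | c :: r => (c + 1) :: r
    else 1 :: rle (b :: l)

/-- Erase a leading `1`, if any. -/
def trim1 : List ℕ → List ℕ
  | 1 :: l => l
  | l => l

/-- The derivative `D`: the run-length encoding with the first and/or the last
symbol erased when they are equal to `1`. -/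
def D (w : List ℕ) : List ℕ := trim1 ((trim1 (rle w).reverse).reverse)

/-- Words over Σ = {1,2}. -/
def IsWord (w : List ℕ) : Prop := ∀ x ∈ w, x = 1 ∨ x = 2

/-- Words over Σ₀ = {0,1,2}. -/
def IsWord0 (w : List ℕ) : Prop := ∀ x ∈ w, x = 0 ∨ x = 1 ∨ x = 2

/-- Σ₀^{++}: words over Σ₀ that are empty or begin with a nonzero symbol. -/
def Spp (w : List ℕ) : Prop := IsWord0 w ∧ (w = [] ∨ w.headI ≠ 0)

/-- C^∞-words: every iterated derivative is a word over Σ = {1,2}. -/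
def Cinf (w : List ℕ) : Prop := ∀ k, IsWord (D^[k] w)

/-- The height of a C^∞-word: the least k with D^[k] w = ε. -/
noncomputable def height (w : List ℕ) : ℕ := sInf {k | D^[k] w = []}

/-- The root of a C^∞-word of height k > 0: its (k-1)-st derivative. -/
noncomputable def root (w : List ℕ) : List ℕ := D^[height w - 1] w

/-- `v` is a primitive of `w`. -/
def Primitive (v w : List ℕ) : Prop := IsWord v ∧ D v = w

/-- The complement: swap 1's and 2's. -/
def compl (w : List ℕ) : List ℕ := w.map (fun x => 3 - x)

/-- Minimal C^∞-words: every derivative is a shortest primitive of the next one. -/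
def Minimal (w : List ℕ) : Prop :=
  Cinf w ∧ 0 < height w ∧
    ∀ j, j + 2 ≤ height w → ∀ v, Primitive v (D^[j+1] w) → (D^[j] w).length ≤ v.length

/-- Maximal C^∞-words: every derivative is a longest primitive of the next one. -/
def Maximal (w : List ℕ) : Prop :=
  Cinf w ∧ 0 < height w ∧
    ∀ j, j + 2 ≤ height w → ∀ v, Primitive v (D^[j+1] w) → v.length ≤ (D^[j] w).length

def LeftMinimal (w : List ℕ) : Prop := ∃ v, Minimal v ∧ w <+: v
def RightMinimal (w : List ℕ) : Prop := ∃ v, Minimal v ∧ w <:+ v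
def LeftMaximal (w : List ℕ) : Prop := ∃ v, Maximal v ∧ w <+: v
def RightMaximal (w : List ℕ) : Prop := ∃ v, Maximal v ∧ w <:+ v

/-- Single-rooted minimal words. -/
def SRMin (w : List ℕ) : Prop := Minimal w ∧ (root w).length = 1

/-- Double-rooted minimal words. -/
def DRMin (w : List ℕ) : Prop := Minimal w ∧ (root w).length = 2

/-- The left frontier Ψ(w). -/
noncomputable def psi (w : List ℕ) : List ℕ :=
  (List.range (height w)).map fun i =>
    if i = 0 then w.getD 0 0
    else if (D^[i] w).getD 0 0 = 2 ∧ (D^[i-1] w).getD 0 0 ≠ (D^[i-1] w).getD 1 0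
      then 0
    else (D^[i] w).getD 0 0

/-- The single-rooted minimal word with left frontier U (if it exists). -/
noncomputable def srmOf (U : List ℕ) : List ℕ :=
  if h : ∃ w, SRMin w ∧ psi w = U then h.choose else []

/-- The double-rooted minimal word with left frontier U (if it exists). -/
noncomputable def drmOf (U : List ℕ) : List ℕ :=
  if h : ∃ w, DRMin w ∧ psi w = U then h.choose else []

/-- Γs: the right frontier of the single-rooted minimal word with left frontier U. -/
noncomputable def Gs (U : List ℕ) : List ℕ := psi (srmOf U).reverse

/-- Γd: the right frontier of the double-rooted minimal word with left frontier U. -/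
noncomputable def Gd (U : List ℕ) : List ℕ := psi (drmOf U).reverse

/-- Θ = Γs ∘ Γd. -/
noncomputable def Th (U : List ℕ) : List ℕ := Gs (Gd U)

/-- Π = Γd ∘ Γs. -/
noncomputable def Pp (U : List ℕ) : List ℕ := Gd (Gs U)

/-- One step in the graph G: from node U, the edge labeled 1 goes to U·1, the edge
labeled 2 goes to U·2, and the edge labeled 0 goes to Θ(U)·2. -/
noncomputable def step (U : List ℕ) (a : ℕ) : List ℕ :=
  if a = 1 then U ++ [1] else if a = 2 then U ++ [2] else Th U ++ [2]

/-- The endpoint of the path in G starting at the origin ε and labeled by W. -/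
noncomputable def pathEnd (W : List ℕ) : List ℕ := W.foldl step []

/-- W ∈ Σ₀^{++} labels a directed path in G from ε to U. -/
def LabelsPath (W U : List ℕ) : Prop := Spp W ∧ pathEnd W = U

/-- ‖U‖: the number of words in Σ₀^{++} labeling a path in G from ε to U. -/
noncomputable def normG (U : List ℕ) : ℕ := {W | LabelsPath W U}.ncard

/-- |U|: the length of the single-rooted minimal word with left frontier U. -/
noncomputable def len (U : List ℕ) : ℕ := (srmOf U).length

/-- u is the minimal part of w: the first (leftmost-occurring) factor of w that
is a single-rooted minimal word of the same height as w. -/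
def IsMinPart (u w : List ℕ) : Prop :=
  ∃ s t, w = s ++ u ++ t ∧ SRMin u ∧ height u = height w ∧
    ∀ u' s' t', w = s' ++ u' ++ t' → SRMin u' → height u' = height w →
      s.length ≤ s'.length

-- trim1 basics
lemma trim1_nil : trim1 [] = [] := rfl
lemma trim1_one (l : List ℕ) : trim1 (1 :: l) = l := rfl
lemma trim1_cons {c : ℕ} (l : List ℕ) (h : c ≠ 1) : trim1 (c :: l) = c :: l := by
  match c, h with
  | 0, _ => rfl
  | (n+2), _ => rfl

lemma headI_append {l : List ℕ} (t : List ℕ) (h : l ≠ []) : (l ++ t).headI = l.headI := by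
  cases l with
  | nil => exact absurd rfl h
  | cons a l' => rfl

lemma headI_mem {l : List ℕ} (h : l ≠ []) : l.headI ∈ l := by
  cases l with
  | nil => exact absurd rfl h
  | cons a l' => exact List.mem_cons_self

lemma headI_reverse {l : List ℕ} (h : l ≠ []) : l.reverse.headI = l.getLast h := by
  rcases List.eq_nil_or_concat' l with rfl | ⟨L, b, rfl⟩
  · exact absurd rfl h
  · simp [List.getLast_append_singleton]

lemma trim1_eq_iff {w : List ℕ} (hw : w ≠ []) (x : List ℕ) :
    trim1 x = w ↔ x = 1 :: w ∨ (x = w ∧ w.headI ≠ 1) := by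
  constructor
  · intro h
    match x with
    | [] => exact absurd h.symm hw
    | c :: t =>
      by_cases hc : c = 1
      · subst hc; rw [trim1_one] at h; left; rw [h]
      · rw [trim1_cons t hc] at h; right; exact ⟨h, by rw [← h]; simpa using hc⟩
  · rintro (rfl | ⟨h2, h⟩)
    · exact trim1_one _
    · subst h2
      match x, hw with
      | c :: t, _ => exact trim1_cons t (by simpa using h)

lemma trimT_eq_iff {w : List ℕ} (hw : w ≠ []) (x : List ℕ) :
    (trim1 x.reverse).reverse = w ↔ x = w ++ [1] ∨ (x = w ∧ w.reverse.headI ≠ 1) := by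
  rw [List.reverse_eq_iff, trim1_eq_iff (by simpa using hw)]
  constructor
  · rintro (h | ⟨h, h2⟩)
    · left; rw [← List.reverse_reverse x, h]; simp
    · right
      exact ⟨by simpa using congrArg List.reverse h, h2⟩
  · rintro (rfl | ⟨rfl, h2⟩)
    · left; simp
    · right; exact ⟨rfl, by simpa using h2⟩

lemma D_eq_iff {w : List ℕ} (hw : w ≠ []) (v : List ℕ) :
    D v = w ↔ rle v = 1 :: (w ++ [1])
      ∨ (rle v = 1 :: w ∧ w.reverse.headI ≠ 1)
      ∨ (rle v = w ++ [1] ∧ w.headI ≠ 1)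
      ∨ (rle v = w ∧ w.headI ≠ 1 ∧ w.reverse.headI ≠ 1) := by
  unfold D
  rw [trim1_eq_iff hw, trimT_eq_iff (show (1:ℕ) :: w ≠ [] by simp),
    trimT_eq_iff hw]
  have h1 : ((1:ℕ) :: w).reverse.headI = w.reverse.headI := by
    rw [List.reverse_cons, headI_append _ (by simpa using hw)]
  have h2 : ((1:ℕ) :: w) ++ [1] = 1 :: (w ++ [1]) := rfl
  rw [h1, h2]
  tauto

def build (a : ℕ) : List ℕ → List ℕ
  | [] => []
  | c :: r => List.replicate c a ++ build (3 - a) r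

lemma build_nil (a : ℕ) : build a [] = [] := rfl
lemma build_cons (a c : ℕ) (r : List ℕ) :
    build a (c :: r) = List.replicate c a ++ build (3 - a) r := rfl

lemma headI_build (a : ℕ) {c : ℕ} (r : List ℕ) (hc : c ≠ 0) :
    (build a (c :: r)).headI = a := by
  match c, hc with
  | (n+1), _ => rw [build_cons, List.replicate_succ]; rfl

lemma build_cons_ne_nil (a : ℕ) {c : ℕ} (r : List ℕ) (hc : c ≠ 0) :
    build a (c :: r) ≠ [] := by
  match c, hc with
  | (n+1), _ => rw [build_cons, List.replicate_succ]; simp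

lemma rle_cons' (a : ℕ) {t : List ℕ} (h : t = [] ∨ t.headI ≠ a) :
    rle (a :: t) = 1 :: rle t := by
  match t with
  | [] => rfl
  | b :: l =>
    have hba : ¬ a = b := by
      rcases h with h | h
      · exact absurd h (by simp)
      · simp at h; exact fun he => h he.symm
    simp [rle, hba]

lemma rle_cons_cons' (a : ℕ) {t : List ℕ} (h : t = [] ∨ t.headI ≠ a) :
    rle (a :: a :: t) = 2 :: rle t := by
  have h1 : rle (a :: t) = 1 :: rle t := rle_cons' a h
  show (if a = a then
      match rle (a :: t) with
      | [] => [1]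
      | c :: r => (c + 1) :: r
    else 1 :: rle (a :: t)) = 2 :: rle t
  rw [if_pos rfl, h1]

lemma isWord_build {a : ℕ} (ha : a = 1 ∨ a = 2) (r : List ℕ) : IsWord (build a r) := by
  induction r generalizing a with
  | nil => intro x hx; simp [build_nil] at hx
  | cons c r IH =>
    intro x hx
    rw [build_cons] at hx
    rcases List.mem_append.1 hx with hx | hx
    · rw [List.eq_of_mem_replicate hx]; exact ha
    · exact IH (by omega) x hx

lemma rle_build {a : ℕ} (ha : a = 1 ∨ a = 2) (r : List ℕ)
    (hr : ∀ c ∈ r, c = 1 ∨ c = 2) : rle (build a r) = r := by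
  induction r generalizing a with
  | nil => rfl
  | cons c r IH =>
    have hhead : build (3 - a) r = [] ∨ (build (3 - a) r).headI ≠ a := by
      match r with
      | [] => exact Or.inl rfl
      | c' :: r' =>
        right
        rw [headI_build _ _ (by rcases hr c' (by simp) with h | h <;> omega)]
        omega
    have IH' : rle (build (3 - a) r) = r :=
      IH (by omega) (fun c hc => hr c (by simp [hc]))
    rcases hr c (by simp) with rfl | rfl
    · rw [build_cons]
      show rle (a :: build (3 - a) r) = 1 :: r
      rw [rle_cons' a hhead, IH']
    · rw [build_cons]
      show rle (a :: a :: build (3 - a) r) = 2 :: r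
      rw [rle_cons_cons' a hhead, IH']

lemma rle_ne_nil {v : List ℕ} (h : v ≠ []) : rle v ≠ [] := by
  match v with
  | [a] => simp [rle]
  | a :: b :: l =>
    by_cases hab : a = b
    · subst hab
      show (if a = a then
          match rle (a :: l) with
          | [] => [1]
          | c :: r => (c + 1) :: r
        else 1 :: rle (a :: l)) ≠ []
      rw [if_pos rfl]
      cases rle (a :: l) <;> simp
    · simp [rle, hab]

lemma build_rle_aux : ∀ n (v : List ℕ), v.length ≤ n → IsWord v →
    build v.headI (rle v) = v := by
  intro n
  induction n with
  | zero =>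
    intro v hlen _
    match v, hlen with
    | [], _ => rfl
  | succ n IH =>
    intro v hlen hword
    match v with
    | [] => rfl
    | [a] => show List.replicate 1 a ++ build (3 - a) [] = [a]; rfl
    | a :: b :: t =>
      by_cases hab : a = b
      · subst hab
        obtain ⟨c, r, hcr⟩ : ∃ c r, rle (a :: t) = c :: r := by
          cases h : rle (a :: t) with
          | nil => exact absurd h (rle_ne_nil (by simp))
          | cons c r => exact ⟨c, r, rfl⟩
        have h2 : rle (a :: a :: t) = (c + 1) :: r := by
          show (if a = a then
              match rle (a :: t) with
              | [] => [1]
              | c :: r => (c + 1) :: r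
            else 1 :: rle (a :: t)) = (c + 1) :: r
          rw [if_pos rfl, hcr]
        have IH' : build a (c :: r) = a :: t := by
          have := IH (a :: t) (by simpa using Nat.le_of_succ_le_succ hlen)
            (fun x hx => hword x (by simp at hx ⊢; tauto))
          rwa [hcr] at this
        have IH'' : List.replicate c a ++ build (3 - a) r = a :: t := IH'
        rw [List.headI_cons, h2, build_cons, List.replicate_succ]
        simpa using IH''
      · have ha : a = 1 ∨ a = 2 := hword a (by simp)
        have hb : b = 1 ∨ b = 2 := hword b (by simp)
        have h3 : 3 - a = b := by omega
        have h1 : rle (a :: b :: t) = 1 :: rle (b :: t) :=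
          rle_cons' a (Or.inr (by simpa using fun he => hab he.symm))
        have IH' : build b (rle (b :: t)) = b :: t := by
          have := IH (b :: t) (by simpa using Nat.le_of_succ_le_succ hlen)
            (fun x hx => hword x (by simp at hx ⊢; tauto))
          simpa using this
        rw [List.headI_cons, h1, build_cons, List.replicate_succ, h3]
        simp [IH']

lemma build_rle {v : List ℕ} (hword : IsWord v) :
    build v.headI (rle v) = v :=
  build_rle_aux v.length v le_rfl hword

def cands (w : List ℕ) : Set (List ℕ) :=
  {r | r = 1 :: (w ++ [1]) ∨ (r = 1 :: w ∧ w.reverse.headI ≠ 1)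
     ∨ (r = w ++ [1] ∧ w.headI ≠ 1) ∨ (r = w ∧ w.headI ≠ 1 ∧ w.reverse.headI ≠ 1)}

lemma cands_entries {w : List ℕ} (hword : IsWord w) :
    ∀ r ∈ cands w, ∀ c ∈ r, c = 1 ∨ c = 2 := by
  intro r hrc c hc
  have hwc := hword c
  rcases hrc with rfl | ⟨rfl, _⟩ | ⟨rfl, _⟩ | ⟨rfl, _, _⟩ <;> (try simp at hc) <;> tauto

lemma cands_head {w : List ℕ} (hword : IsWord w) (hne : w ≠ []) :
    ∀ r ∈ cands w, ∃ c r', r = c :: r' ∧ c ≠ 0 := by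
  intro r hrc
  obtain ⟨c, r', rfl⟩ : ∃ c r', r = c :: r' := by
    have hrn : r ≠ [] := by
      rcases hrc with rfl | ⟨rfl, _⟩ | ⟨rfl, _⟩ | ⟨rfl, _, _⟩ <;> simp [hne]
    cases r with
    | nil => exact absurd rfl hrn
    | cons c r' => exact ⟨c, r', rfl⟩
  refine ⟨c, r', rfl, ?_⟩
  have : c ∈ c :: r' := by simp
  rcases cands_entries hword _ hrc c this with rfl | rfl <;> omega

lemma prim_set_eq {w : List ℕ} (hword : IsWord w) (hne : w ≠ []) :
    {v | Primitive v w} = build 1 '' cands w ∪ build 2 '' cands w := by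
  have key : ∀ a, a = 1 ∨ a = 2 → ∀ r ∈ cands w, Primitive (build a r) w := by
    intro a ha r hrc
    refine ⟨isWord_build ha r, ?_⟩
    refine (D_eq_iff hne _).2 ?_
    rw [rle_build ha r (cands_entries hword r hrc)]
    exact hrc
  ext v
  simp only [Set.mem_setOf_eq, Set.mem_union, Set.mem_image]
  constructor
  · rintro ⟨hv, hD⟩
    have hvne : v ≠ [] := by
      rintro rfl
      rw [show D [] = [] from rfl] at hD
      exact hne hD.symm
    have hr : rle v ∈ cands w := (D_eq_iff hne v).1 hD
    have hb := build_rle hv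
    rcases hv v.headI (headI_mem hvne) with h1 | h1
    · exact Or.inl ⟨rle v, hr, by rw [← h1]; exact hb⟩
    · exact Or.inr ⟨rle v, hr, by rw [← h1]; exact hb⟩
  · rintro (⟨r, hr, rfl⟩ | ⟨r, hr, rfl⟩)
    · exact key 1 (Or.inl rfl) r hr
    · exact key 2 (Or.inr rfl) r hr

lemma cands_finite (w : List ℕ) : (cands w).Finite := by
  have hsub : cands w ⊆ ({1 :: (w ++ [1]), 1 :: w, w ++ [1], w} : Set (List ℕ)) := by
    rintro r (rfl | ⟨rfl, _⟩ | ⟨rfl, _⟩ | ⟨rfl, _, _⟩) <;> simp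
  exact Set.Finite.subset
    ((((Set.finite_singleton w).insert (w ++ [1])).insert (1 :: w)).insert (1 :: (w ++ [1]))) hsub

lemma ncard_prim {w : List ℕ} (hword : IsWord w) (hne : w ≠ []) :
    {v | Primitive v w}.ncard = 2 * (cands w).ncard := by
  rw [prim_set_eq hword hne]
  have hfin := cands_finite w
  have hinj : ∀ a : ℕ, a = 1 ∨ a = 2 → Set.InjOn (build a) (cands w) := by
    intro a ha r hr r' hr' he
    have e1 : rle (build a r) = r := rle_build ha r (cands_entries hword r hr)
    have e2 : rle (build a r') = r' := rle_build ha r' (cands_entries hword r' hr')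
    rw [← e1, ← e2, he]
  have hdisj : Disjoint (build 1 '' cands w) (build 2 '' cands w) := by
    rw [Set.disjoint_left]
    rintro v ⟨r, hr, rfl⟩ ⟨r', hr', he⟩
    obtain ⟨c, t, rfl, hc⟩ := cands_head hword hne r hr
    obtain ⟨c', t', rfl, hc'⟩ := cands_head hword hne r' hr'
    have h1 : (build 1 (c :: t)).headI = 1 := headI_build 1 t hc
    have h2 : (build 2 (c' :: t')).headI = 2 := headI_build 2 t' hc'
    rw [he, h1] at h2
    exact absurd h2 (by norm_num)
  rw [Set.ncard_union_eq hdisj (hfin.image _) (hfin.image _),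
    Set.ncard_image_of_injOn (hinj 1 (Or.inl rfl)),
    Set.ncard_image_of_injOn (hinj 2 (Or.inr rfl))]
  ring

lemma ne_of_len {x y : List ℕ} (h : x.length ≠ y.length) : x ≠ y :=
  fun he => h (he ▸ rfl)


/-- a nonempty C∞-word has exactly two primitives if it begins and
ends with 1, exactly eight if it begins and ends with 2, and exactly four otherwise. -/
theorem primitive_count (w : List ℕ) (hw : Cinf w) (hne : w ≠ []) :
    {v | Primitive v w}.ncard =
      if w.headI = 1 ∧ w.getLast hne = 1 then 2
      else if w.headI = 2 ∧ w.getLast hne = 2 then 8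
      else 4 := by
  have hword : IsWord w := by simpa using hw 0
  have ha : w.headI = 1 ∨ w.headI = 2 := hword _ (headI_mem hne)
  have hgl : w.getLast hne = w.reverse.headI := (headI_reverse hne).symm
  have hb : w.reverse.headI = 1 ∨ w.reverse.headI = 2 := by
    rw [← hgl]; exact hword _ (List.getLast_mem hne)
  rw [ncard_prim hword hne]
  rcases ha with ha | ha <;> rcases hb with hb | hb
  · -- begins with 1, ends with 1
    have hc : cands w = {1 :: (w ++ [1])} := by
      ext r
      simp only [cands, Set.mem_setOf_eq, Set.mem_singleton_iff]
      constructor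
      · rintro (rfl | ⟨rfl, h⟩ | ⟨rfl, h⟩ | ⟨rfl, h, _⟩)
        · rfl
        · exact absurd hb h
        · exact absurd ha h
        · exact absurd ha h
      · rintro rfl; exact Or.inl rfl
    rw [hc, Set.ncard_singleton, if_pos ⟨ha, by rw [hgl, hb]⟩]
  · -- begins with 1, ends with 2
    have hc : cands w = {1 :: (w ++ [1]), 1 :: w} := by
      ext r
      simp only [cands, Set.mem_setOf_eq, Set.mem_insert_iff, Set.mem_singleton_iff]
      constructor
      · rintro (rfl | ⟨rfl, h⟩ | ⟨rfl, h⟩ | ⟨rfl, h, _⟩)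
        · tauto
        · tauto
        · exact absurd ha h
        · exact absurd ha h
      · rintro (rfl | rfl)
        · tauto
        · exact Or.inr (Or.inl ⟨rfl, by rw [hb]; norm_num⟩)
    have hd : (1 :: (w ++ [1])) ≠ (1 :: w) := ne_of_len (by
      simp only [List.length_cons, List.length_append, List.length_singleton]; omega)
    have h1 : ¬ (w.headI = 1 ∧ w.getLast hne = 1) := by
      rintro ⟨_, h⟩; rw [hgl, hb] at h; norm_num at h
    have h2 : ¬ (w.headI = 2 ∧ w.getLast hne = 2) := by
      rintro ⟨h, _⟩; rw [ha] at h; norm_num at h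
    rw [hc, Set.ncard_pair hd, if_neg h1, if_neg h2]
  · -- begins with 2, ends with 1
    have hc : cands w = {1 :: (w ++ [1]), w ++ [1]} := by
      ext r
      simp only [cands, Set.mem_setOf_eq, Set.mem_insert_iff, Set.mem_singleton_iff]
      constructor
      · rintro (rfl | ⟨rfl, h⟩ | ⟨rfl, h⟩ | ⟨rfl, _, h⟩)
        · tauto
        · exact absurd hb h
        · tauto
        · exact absurd hb h
      · rintro (rfl | rfl)
        · tauto
        · exact Or.inr (Or.inr (Or.inl ⟨rfl, by rw [ha]; norm_num⟩))
    have hd : (1 :: (w ++ [1])) ≠ (w ++ [1]) := ne_of_len (by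
      simp only [List.length_cons, List.length_append, List.length_singleton]; omega)
    have h1 : ¬ (w.headI = 1 ∧ w.getLast hne = 1) := by
      rintro ⟨h, _⟩; rw [ha] at h; norm_num at h
    have h2 : ¬ (w.headI = 2 ∧ w.getLast hne = 2) := by
      rintro ⟨_, h⟩; rw [hgl, hb] at h; norm_num at h
    rw [hc, Set.ncard_pair hd, if_neg h1, if_neg h2]
  · -- begins with 2, ends with 2
    have hc : cands w =
        insert (1 :: (w ++ [1])) (insert (1 :: w) ({w ++ [1], w} : Set (List ℕ))) := by
      ext r
      simp only [cands, Set.mem_setOf_eq, Set.mem_insert_iff, Set.mem_singleton_iff]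
      constructor
      · rintro (rfl | ⟨rfl, h⟩ | ⟨rfl, h⟩ | ⟨rfl, h, _⟩) <;> tauto
      · rintro (rfl | rfl | rfl | rfl)
        · tauto
        · exact Or.inr (Or.inl ⟨rfl, by rw [hb]; norm_num⟩)
        · exact Or.inr (Or.inr (Or.inl ⟨rfl, by rw [ha]; norm_num⟩))
        · exact Or.inr (Or.inr (Or.inr ⟨rfl, by rw [ha]; norm_num, by rw [hb]; norm_num⟩))
    have d0 : (1 :: (w ++ [1])) ∉ (insert (1 :: w) ({w ++ [1], w} : Set (List ℕ))) := by
      simp only [Set.mem_insert_iff, Set.mem_singleton_iff]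
      push_neg
      refine ⟨?_, ?_, ?_⟩ <;> exact ne_of_len (by
        simp only [List.length_cons, List.length_append, List.length_singleton]; omega)
    have d1 : (1 :: w) ∉ ({w ++ [1], w} : Set (List ℕ)) := by
      simp only [Set.mem_insert_iff, Set.mem_singleton_iff]
      push_neg
      constructor
      · intro h
        have := congrArg List.headI h
        rw [List.headI_cons, headI_append _ hne, ha] at this
        norm_num at this
      · exact ne_of_len (by simp only [List.length_cons]; omega)
    have d2 : (w ++ [1]) ≠ w := ne_of_len (by
      simp only [List.length_append, List.length_singleton]; omega)
    have h1 : ¬ (w.headI = 1 ∧ w.getLast hne = 1) := by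
      rintro ⟨h, _⟩; rw [ha] at h; norm_num at h
    rw [hc, Set.ncard_insert_of_notMem d0
        (((Set.finite_singleton w).insert (w ++ [1])).insert (1 :: w)),
      Set.ncard_insert_of_notMem d1 ((Set.finite_singleton w).insert (w ++ [1])),
      Set.ncard_pair d2, if_neg h1, if_pos ⟨ha, by rw [hgl, hb]⟩]


end CInfWords
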